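/- Let Δ be a (d−1)-dimensional balanced simplicial complex on [n] with coloring map κ, let K be an infinite field, and for i ∈ [d] let θ_i = Σ_{v ∈ [n], κ(v)=i} x_v. Then θ_1,…,θ_d is a linear system of parameters of the Stanley-Reisner ring K[Δ], i.e., K[Δ]/((θ_1,…,θ_d)K[Δ]) is a finite-dimensional K-vector space. -/

import Mathlib

open Finset BigOperators

namespace BGLB

variable {V : Type*} [DecidableEq V]

/-- `Δ` is an (abstract) simplicial complex: it contains the empty face and is
closed under taking subsets. -/
def IsComplex (Δ : Finset (Finset V)) : Prop :=
  ∅ ∈ Δ ∧ ∀ F ∈ Δ, ∀ G ⊆ F, G ∈ Δ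

/-- `Δ` is pure of dimension `d - 1`: every face is contained in a face of cardinality `d`. -/
def IsPure (d : ℕ) (Δ : Finset (Finset V)) : Prop :=
  ∀ F ∈ Δ, ∃ G ∈ Δ, F ⊆ G ∧ G.card = d

/-- `Δ` has dimension at most `d - 1`. -/
def DimLE (d : ℕ) (Δ : Finset (Finset V)) : Prop := ∀ F ∈ Δ, F.card ≤ d

/-- `Δ` has dimension exactly `d - 1`. -/
def DimEq (d : ℕ) (Δ : Finset (Finset V)) : Prop := DimLE d Δ ∧ ∃ F ∈ Δ, F.card = d

/-- `fNum Δ j` is the number `f_{j-1}(Δ)` of faces of `Δ` of cardinality `j`. -/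
def fNum (Δ : Finset (Finset V)) (j : ℕ) : ℕ := (Δ.filter fun F => F.card = j).card

/-- The `h`-numbers of `Δ` with respect to the dimension parameter `d`:
`h_i = ∑_{j=0}^{i} (-1)^{i-j} C(d-j, i-j) f_{j-1}`. -/
def hNum (d : ℕ) (Δ : Finset (Finset V)) (i : ℕ) : ℤ :=
  ∑ j ∈ Finset.range (i + 1), (-1 : ℤ) ^ (i - j) * ((d - j).choose (i - j)) * fNum Δ j

/-- The balanced `g`-numbers `g̅_i = i h_i - (d - i + 1) h_{i-1}` (with `h_{-1} = 0`). -/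
def gbar (d : ℕ) (Δ : Finset (Finset V)) : ℕ → ℤ
  | 0 => 0
  | i + 1 => (i + 1 : ℤ) * hNum d Δ (i + 1) - ((d : ℤ) - (i + 1) + 1) * hNum d Δ i

/-- `κ` is a proper `d`-coloring of (the graph of) `Δ`: the two endpoints of any
edge get different colors. -/
def IsBalanced (d : ℕ) (Δ : Finset (Finset V)) (κ : V → Fin d) : Prop :=
  ∀ F ∈ Δ, F.card = 2 → ∀ x ∈ F, ∀ y ∈ F, x ≠ y → κ x ≠ κ y

/-- The rank-selected subcomplex `Δ_T = {F ∈ Δ : κ(F) ⊆ T}`. -/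
def rankSel {d : ℕ} (Δ : Finset (Finset V)) (κ : V → Fin d) (T : Finset (Fin d)) :
    Finset (Finset V) :=
  Δ.filter fun F => ∀ v ∈ F, κ v ∈ T

/-- The link `lk_Δ(F) = {G ∈ Δ : F ∪ G ∈ Δ, F ∩ G = ∅}`. -/
def link (Δ : Finset (Finset V)) (F : Finset V) : Finset (Finset V) :=
  Δ.filter fun G => Disjoint F G ∧ F ∪ G ∈ Δ





/-- The Stanley-Reisner ideal of `Δ` in `K[x_v : v ∈ V]`: the ideal generated by the
squarefree monomials `x_F = ∏_{v ∈ F} x_v` for the non-faces `F ∉ Δ`. -/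
noncomputable def srIdeal (K : Type*) [Field K] (Δ : Finset (Finset V)) : Ideal (MvPolynomial V K) :=
  Ideal.span {m | ∃ F : Finset V, F ∉ Δ ∧ m = ∏ v ∈ F, MvPolynomial.X v}

/-- The sum of variables of color `i`: `θ_i = ∑_{κ(v) = i} x_v`. -/
noncomputable def colorSum (K : Type*) [Field K] {n d : ℕ} (κ : Fin n → Fin d) (i : Fin d) :
    MvPolynomial (Fin n) K :=
  ∑ v ∈ Finset.univ.filter (fun v => κ v = i), MvPolynomial.X v

/-- The degree `i` component (w.r.t. the standard grading) of the quotient of a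
polynomial ring by the ideal `I`, as the image of the degree `i` homogeneous part. -/
noncomputable def piece (K : Type*) [Field K] {σ : Type*} (I : Ideal (MvPolynomial σ K)) (i : ℕ) :
    Submodule K (MvPolynomial σ K ⧸ I) :=
  (MvPolynomial.homogeneousSubmodule σ K i).map (Ideal.Quotient.mkₐ K I).toLinearMap

/-- The degree `a` component (w.r.t. the grading weighted by `w`) of the quotient of a
polynomial ring by the ideal `I`. -/
noncomputable def wpiece (K : Type*) [Field K] {σ M : Type*} [AddCommMonoid M] (w : σ → M)
    (I : Ideal (MvPolynomial σ K)) (a : M) :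
    Submodule K (MvPolynomial σ K ⧸ I) :=
  (MvPolynomial.weightedHomogeneousSubmodule K w a).map (Ideal.Quotient.mkₐ K I).toLinearMap

/-- `θ` is a linear system of parameters for `(MvPolynomial σ K) ⧸ I`:
a sequence of linear forms such that the quotient by them is a finite-dimensional
`K`-vector space. -/
def IsLSOP (K : Type*) [Field K] {σ : Type*} (I : Ideal (MvPolynomial σ K)) {m : ℕ}
    (θ : Fin m → MvPolynomial σ K) : Prop :=
  (∀ i, θ i ∈ MvPolynomial.homogeneousSubmodule σ K 1) ∧
    FiniteDimensional K (MvPolynomial σ K ⧸ (I ⊔ Ideal.span (Set.range θ)))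

/-- `Δ` (of dimension `d - 1`) is Cohen-Macaulay over `K`: every linear system of
parameters of the Stanley-Reisner ring `K[Δ]` is a regular sequence on `K[Δ]`. -/
def IsCM (K : Type*) [Field K] (d : ℕ) (Δ : Finset (Finset V)) : Prop :=
  ∀ θ : Fin d → MvPolynomial V K, IsLSOP K (srIdeal K Δ) θ →
    RingTheory.Sequence.IsRegular (MvPolynomial V K ⧸ srIdeal K Δ) (List.ofFn θ)

section Homology

variable [LinearOrder V] [Fintype V] (K : Type*) [Field K]

/-- The faces of `Δ` of cardinality `k`. -/
def Faces (Δ : Finset (Finset V)) (k : ℕ) : Type _ := {F : Finset V // F ∈ Δ ∧ F.card = k}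

/-- The simplicial (reduced) boundary map from `k+1`-element faces to `k`-element faces:
`∂(e_F) = ∑_{v ∈ F} (-1)^{|{u ∈ F : u < v}|} e_{F \ v}`, written in the dual basis. -/
noncomputable def bdry (Δ : Finset (Finset V)) (k : ℕ) :
    ((Faces Δ (k + 1) → K) →ₗ[K] (Faces Δ k → K)) :=
  LinearMap.pi fun G =>
    ∑ v ∈ Finset.univ \ G.1,
      if h : insert v G.1 ∈ Δ ∧ (insert v G.1).card = k + 1 then
        ((-1 : K) ^ (G.1.filter (fun u => u < v)).card) •
          (LinearMap.proj (⟨insert v G.1, h⟩ : Faces Δ (k + 1)))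
      else 0

/-- The reduced cycles in cardinality `k`: everything for `k = 0` (chains on the empty
face), and the kernel of the boundary map for `k ≥ 1`. -/
noncomputable def cycles (Δ : Finset (Finset V)) : (k : ℕ) → Submodule K (Faces Δ k → K)
  | 0 => ⊤
  | j + 1 => LinearMap.ker (bdry K Δ j)

/-- The reduced simplicial homology `H̃_{k-1}(Δ; K)` (indexed so that `k` is the
cardinality of the faces involved): cycles modulo boundaries. -/
noncomputable abbrev redHomology (Δ : Finset (Finset V)) (k : ℕ) :=
  cycles K Δ k ⧸ (LinearMap.range (bdry K Δ k)).comap (cycles K Δ k).subtype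

/-- `Δ` (of dimension `d-1`) is Gorenstein* over `K`: for every face `F ∈ Δ`, the link of
`F` has the reduced homology of a sphere of dimension `d - 1 - #F`. -/
def IsGorensteinStar (d : ℕ) (Δ : Finset (Finset V)) : Prop :=
  ∀ F ∈ Δ, ∀ k : ℕ,
    (k = d - F.card → Nonempty (redHomology K (link Δ F) k ≃ₗ[K] K)) ∧
    (k ≠ d - F.card → Subsingleton (redHomology K (link Δ F) k))

end Homology

/-- The flag `f`-number `f_S(Δ) = #{F ∈ Δ : κ(F) = S}`. -/
def fFlag {d : ℕ} (κ : V → Fin d) (Δ : Finset (Finset V)) (S : Finset (Fin d)) : ℕ :=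
  (Δ.filter fun F => F.image κ = S).card

/-- The flag `h`-number `h_S(Δ) = ∑_{T ⊆ S} (-1)^{#S - #T} f_T(Δ)`. -/
def hFlag {d : ℕ} (κ : V → Fin d) (Δ : Finset (Finset V)) (S : Finset (Fin d)) : ℤ :=
  ∑ T ∈ S.powerset, (-1 : ℤ) ^ (S.card - T.card) * fFlag κ Δ T

/-- Lemma 2.2(iii).
For a balanced `(d-1)`-dimensional simplicial complex `Δ`, the color sums
`θ_1, …, θ_d` form a linear system of parameters of `K[Δ]`: the quotient
`K[Δ]/((θ_1,…,θ_d) K[Δ])` is a finite-dimensional `K`-vector space. -/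
theorem colorSums_lsop (K : Type*) [Field K] [Infinite K] (n d : ℕ)
    (Δ : Finset (Finset (Fin n))) (hΔ : IsComplex Δ) (hdim : DimEq d Δ)
    (κ : Fin n → Fin d) (hκ : IsBalanced d Δ κ) :
    FiniteDimensional K (MvPolynomial (Fin n) K ⧸
      (srIdeal K Δ ⊔ Ideal.span (Set.range fun i : Fin d => colorSum K κ i))) := by
  set J := srIdeal K Δ ⊔ Ideal.span (Set.range fun i : Fin d => colorSum K κ i) with hJ
  -- each variable squares to zero modulo J
  have hsq : ∀ v : Fin n, (MvPolynomial.X v : MvPolynomial (Fin n) K) ^ 2 ∈ J := by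
    intro v
    have hθ : colorSum K κ (κ v) ∈ J :=
      Ideal.mem_sup_right (Ideal.subset_span ⟨κ v, rfl⟩)
    have h1 : MvPolynomial.X v * colorSum K κ (κ v) ∈ J := Ideal.mul_mem_left _ _ hθ
    have hv : v ∈ Finset.univ.filter (fun w => κ w = κ v) := by simp
    have hexp : MvPolynomial.X v * colorSum K κ (κ v) =
        (MvPolynomial.X v) ^ 2 +
          ∑ w ∈ (Finset.univ.filter (fun w => κ w = κ v)).erase v,
            MvPolynomial.X v * MvPolynomial.X w := by
      rw [colorSum, Finset.mul_sum, ← Finset.add_sum_erase _ _ hv, sq]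
    have hrest : ∀ w ∈ (Finset.univ.filter (fun w => κ w = κ v)).erase v,
        MvPolynomial.X v * MvPolynomial.X w ∈ J := by
      intro w hw
      have hne : w ≠ v := (Finset.mem_erase.mp hw).1
      have hcol : κ w = κ v := by
        have := (Finset.mem_erase.mp hw).2
        simpa using this
      have hnot : ({v, w} : Finset (Fin n)) ∉ Δ := by
        intro hmem
        exact hκ _ hmem (Finset.card_pair (Ne.symm hne)) v (by simp) w (by simp)
          (Ne.symm hne) hcol.symm
      refine Ideal.mem_sup_left (Ideal.subset_span ⟨{v, w}, hnot, ?_⟩)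
      rw [Finset.prod_pair (Ne.symm hne)]
    have : (MvPolynomial.X v : MvPolynomial (Fin n) K) ^ 2 =
        MvPolynomial.X v * colorSum K κ (κ v) -
          ∑ w ∈ (Finset.univ.filter (fun w => κ w = κ v)).erase v,
            MvPolynomial.X v * MvPolynomial.X w := by
      rw [hexp]; ring
    rw [this]
    exact Ideal.sub_mem _ h1 (Ideal.sum_mem _ hrest)
  -- the quotient is generated as an algebra by the images of the variables
  have hsurj : Function.Surjective (Ideal.Quotient.mkₐ K J) := Ideal.Quotient.mkₐ_surjective K J
  have hgen : Algebra.adjoin K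
      (Set.range fun v : Fin n => Ideal.Quotient.mk J (MvPolynomial.X v)) = ⊤ := by
    have h1 : Algebra.adjoin K (Set.range (MvPolynomial.X :
        Fin n → MvPolynomial (Fin n) K)) = ⊤ := MvPolynomial.adjoin_range_X
    have h2 := AlgHom.map_adjoin (Ideal.Quotient.mkₐ K J)
      (Set.range (MvPolynomial.X : Fin n → MvPolynomial (Fin n) K))
    rw [h1, Algebra.map_top] at h2
    rw [(AlgHom.range_eq_top _).mpr hsurj, ← Set.range_comp] at h2
    exact h2.symm
  have hint : ∀ x ∈ (Set.range fun v : Fin n => Ideal.Quotient.mk J (MvPolynomial.X v)),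
      IsIntegral K x := by
    rintro x ⟨v, rfl⟩
    refine ⟨Polynomial.X ^ 2, Polynomial.monic_X_pow 2, ?_⟩
    have : (Ideal.Quotient.mk J (MvPolynomial.X v)) ^ 2 = 0 := by
      rw [← map_pow, Ideal.Quotient.eq_zero_iff_mem]
      exact hsq v
    simp [this]
  have hfg := fg_adjoin_of_finite (Set.finite_range _) hint
  rw [hgen] at hfg
  have : Module.Finite K (MvPolynomial (Fin n) K ⧸ J) := by
    rw [Module.finite_def]
    simpa [Algebra.top_toSubmodule] using hfg
  exact this

end BGLB
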